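/- arXiv:0811.1952 — 3 statements merged into one kernel-verified Lean document; each statement's English description precedes it below -/
import Mathlib

section
/- For every k ≥ 1, the group homomorphism from the free group F_k to the genus-k surface group Π_k determined by sending the i-th free generator to the generator a_i is injective; in particular its image is a free subgroup of Π_k of rank k. -/
open scoped commutatorElement

/-- The single relator of the genus-`g` surface group:
`[a₁,b₁]·[a₂,b₂]⋯[a_g,b_g]` in the free group on `2g` generators,
where `aᵢ` is generator `2i` and `bᵢ` is generator `2i+1`. -/
def surfaceRelator (g : ℕ) : FreeGroup (Fin (2 * g)) :=
  (List.ofFn (fun i : Fin g =>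
    ⁅FreeGroup.of (⟨2 * i.1, by omega⟩ : Fin (2 * g)),
      FreeGroup.of (⟨2 * i.1 + 1, by omega⟩ : Fin (2 * g))⁆)).prod

/-- The genus-`g` surface group `Π_g`. -/
abbrev SurfaceGroup (g : ℕ) : Type :=
  PresentedGroup ({surfaceRelator g} : Set (FreeGroup (Fin (2 * g))))

/-- The generator `aᵢ` of the genus-`g` surface group. -/
def surfaceA (g : ℕ) (i : Fin g) : SurfaceGroup g :=
  PresentedGroup.of (⟨2 * i.1, by omega⟩ : Fin (2 * g))

/-- The generator `bᵢ` of the genus-`g` surface group. -/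
def surfaceB (g : ℕ) (i : Fin g) : SurfaceGroup g :=
  PresentedGroup.of (⟨2 * i.1 + 1, by omega⟩ : Fin (2 * g))

/-- Retraction on generators: `aᵢ ↦ xᵢ`, `bᵢ ↦ 1`. -/
def retrFun (g : ℕ) (j : Fin (2 * g)) : FreeGroup (Fin g) :=
  if h : j.1 % 2 = 0 then FreeGroup.of ⟨j.1 / 2, by omega⟩ else 1

lemma retr_rel (g : ℕ) : ∀ r ∈ ({surfaceRelator g} : Set (FreeGroup (Fin (2 * g)))),
    FreeGroup.lift (retrFun g) r = 1 := by
  intro r hr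
  rw [Set.mem_singleton_iff] at hr
  subst hr
  rw [surfaceRelator, map_list_prod, List.map_ofFn]
  have : ∀ i : Fin g,
      (FreeGroup.lift (retrFun g) ∘ fun i : Fin g =>
        ⁅FreeGroup.of (⟨2 * i.1, by omega⟩ : Fin (2 * g)),
          FreeGroup.of (⟨2 * i.1 + 1, by omega⟩ : Fin (2 * g))⁆) i = 1 := by
    intro i
    simp only [Function.comp_apply, map_commutatorElement, FreeGroup.lift_apply_of]
    have h1 : retrFun g (⟨2 * i.1 + 1, by omega⟩ : Fin (2 * g)) = 1 := by
      rw [retrFun, dif_neg (by simp only [Fin.val_mk]; omega)]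
    rw [h1, commutatorElement_def]
    group
  apply List.prod_eq_one
  intro x hx
  rw [List.mem_ofFn] at hx
  obtain ⟨i, rfl⟩ := hx
  exact this i

/-- The retraction `Π_g →* F_g`. -/
def retr (g : ℕ) : SurfaceGroup g →* FreeGroup (Fin g) :=
  PresentedGroup.toGroup (retr_rel g)

lemma retr_comp (g : ℕ) :
    (retr g).comp (FreeGroup.lift (fun i : Fin g => surfaceA g i)) = MonoidHom.id _ := by
  apply FreeGroup.ext_hom
  intro i
  simp only [MonoidHom.comp_apply, FreeGroup.lift_apply_of, MonoidHom.id_apply]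
  show retr g (PresentedGroup.of _) = FreeGroup.of i
  rw [retr, PresentedGroup.toGroup.of, retrFun]
  have h : (2 * i.1) % 2 = 0 := Nat.mul_mod_right 2 i.1
  rw [dif_pos h]
  congr 1
  ext
  simp

/-- For `k ≥ 1`, the homomorphism `F_k → Π_k` sending the `i`-th free generator
to `aᵢ` is injective; in particular its image is a free subgroup of rank `k`. -/
theorem freeGroup_to_surfaceGroup_injective (k : ℕ) (hk : 1 ≤ k) :
    Function.Injective (FreeGroup.lift (fun i : Fin k => surfaceA k i)) ∧
    Nonempty
      ((FreeGroup.lift (fun i : Fin k => surfaceA k i)).range ≃* FreeGroup (Fin k)) := by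
  have hinj : Function.Injective (FreeGroup.lift (fun i : Fin k => surfaceA k i)) := by
    have : Function.LeftInverse (retr k) (FreeGroup.lift (fun i : Fin k => surfaceA k i)) := by
      intro x
      have := retr_comp k
      calc retr k (FreeGroup.lift (fun i : Fin k => surfaceA k i) x)
          = ((retr k).comp (FreeGroup.lift (fun i : Fin k => surfaceA k i))) x := rfl
        _ = x := by rw [this]; rfl
    exact this.injective
  exact ⟨hinj, ⟨(MonoidHom.ofInjective hinj).symm⟩⟩
end

section
/- For every g ≥ 2, the genus-g surface group Π_g has trivial center. -/
open scoped commutatorElement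


namespace SGaux





abbrev SL2 := Matrix.SpecialLinearGroup (Fin 2) ℤ

def MA : SL2 := ⟨!![1,2;0,1], by simp [Matrix.det_fin_two_of]⟩
def MB : SL2 := ⟨!![1,0;-2,1], by simp [Matrix.det_fin_two_of]⟩

lemma MA_inv : (MA⁻¹ : SL2) = ⟨!![1,-2;0,1], by simp [Matrix.det_fin_two_of]⟩ := by
  ext i j
  rw [Matrix.SpecialLinearGroup.coe_inv, Matrix.adjugate_fin_two]
  fin_cases i <;> fin_cases j <;> simp [MA]

lemma MB_inv : (MB⁻¹ : SL2) = ⟨!![1,0;2,1], by simp [Matrix.det_fin_two_of]⟩ := by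
  ext i j
  rw [Matrix.SpecialLinearGroup.coe_inv, Matrix.adjugate_fin_two]
  fin_cases i <;> fin_cases j <;> simp [MB]

def MC : SL2 := ⁅MA, MB⁆

lemma MC_val : (MC : Matrix (Fin 2) (Fin 2) ℤ) = !![13,8;8,5] := by
  rw [show MC = MA * MB * MA⁻¹ * MB⁻¹ from rfl, MA_inv, MB_inv]
  ext i j
  simp only [Matrix.SpecialLinearGroup.coe_mul, MA, MB]
  fin_cases i <;> fin_cases j <;>
    simp [Matrix.mul_apply, Fin.sum_univ_two] <;> rfl

def PosM (M : Matrix (Fin 2) (Fin 2) ℤ) : Prop :=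
  0 < M 0 0 ∧ 0 < M 0 1 ∧ 0 < M 1 0 ∧ 0 < M 1 1

lemma posM_mul {M N : Matrix (Fin 2) (Fin 2) ℤ} (hM : PosM M) (hN : PosM N) :
    PosM (M * N) := by
  obtain ⟨a, b, c, e⟩ := hM
  obtain ⟨a', b', c', e'⟩ := hN
  refine ⟨?_, ?_, ?_, ?_⟩ <;>
  · simp [Matrix.mul_apply, Fin.sum_univ_two]
    positivity

lemma posM_MC_pow (n : ℕ) : PosM ((MC ^ (n+1) : SL2) : Matrix (Fin 2) (Fin 2) ℤ) := by
  induction n with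
  | zero => rw [pow_one, MC_val]; norm_num [PosM]
  | succ n ih =>
    rw [pow_succ, Matrix.SpecialLinearGroup.coe_mul]
    exact posM_mul ih (by rw [MC_val]; norm_num [PosM])

lemma MC_zpow_ne_commute {n : ℤ} (hn : n ≠ 0) : ¬ Commute (MC ^ n) MA := by
  -- commuting with MA forces (M 1 0) = 0 via entry (0,0)
  have key : ∀ m : ℕ, ¬ Commute (MC ^ (m+1 : ℕ)) MA := by
    intro m hcomm
    have h := congrArg (fun M : SL2 => (M : Matrix (Fin 2) (Fin 2) ℤ) 0 0) hcomm.eq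
    simp only [Matrix.SpecialLinearGroup.coe_mul] at h
    have hA : (MA : Matrix (Fin 2) (Fin 2) ℤ) = !![1,2;0,1] := rfl
    obtain ⟨_, _, hc, _⟩ := posM_MC_pow m
    set M := ((MC ^ (m+1) : SL2) : Matrix (Fin 2) (Fin 2) ℤ) with hM
    rw [hA] at h
    simp [Matrix.mul_apply, Fin.sum_univ_two] at h
    omega
  intro hcomm
  rcases lt_or_gt_of_ne hn with h | h
  · obtain ⟨m, hm⟩ : ∃ m : ℕ, -n = m + 1 := ⟨(-n).toNat - 1, by omega⟩
    have : Commute (MC ^ (-n)) MA := by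
      rw [_root_.zpow_neg]; exact hcomm.inv_left
    rw [hm] at this
    exact key m (by exact_mod_cast this)
  · obtain ⟨m, hm⟩ : ∃ m : ℕ, n = m + 1 := ⟨n.toNat - 1, by omega⟩
    rw [hm] at hcomm
    exact key m (by exact_mod_cast hcomm)






lemma MC_zpow_eq_one {n : ℤ} (h : MC ^ n = 1) : n = 0 := by
  by_contra hn
  exact MC_zpow_ne_commute hn (h ▸ Commute.one_left MA)

lemma MC_pow_eq_one {n : ℕ} (h : MC ^ n = 1) : n = 0 := by
  have : MC ^ (n : ℤ) = 1 := by rw [zpow_natCast, h]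
  exact_mod_cast MC_zpow_eq_one this





noncomputable def rho (m : ℕ) : FreeGroup (Fin (2 * m)) →* SL2 :=
  FreeGroup.lift (fun k => if k.1 % 2 = 0 then MA else MB)

lemma rho_sr (m : ℕ) : rho m (surfaceRelator m) = MC ^ m := by
  rw [surfaceRelator, MonoidHom.map_list_prod, List.map_ofFn]
  have hfun : (⇑(rho m) ∘ fun i : Fin m =>
      ⁅FreeGroup.of (⟨2 * i.1, by omega⟩ : Fin (2 * m)),
        FreeGroup.of (⟨2 * i.1 + 1, by omega⟩ : Fin (2 * m))⁆) = fun _ : Fin m => MC := by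
    funext i
    have h1 : (rho m) (FreeGroup.of (⟨2 * i.1, by omega⟩ : Fin (2 * m))) = MA := by
      simp [rho, FreeGroup.lift_apply_of]
    have h2 : (rho m) (FreeGroup.of (⟨2 * i.1 + 1, by omega⟩ : Fin (2 * m))) = MB := by
      have : (2 * i.1 + 1) % 2 = 1 := by omega
      simp [rho, FreeGroup.lift_apply_of, this]
    simp only [Function.comp_apply, commutatorElement_def, map_mul, map_inv, h1, h2]
    rfl
  rw [hfun, List.ofFn_const, List.prod_replicate]

/-- powers of `wcomm` are nontrivial -/
lemma sr_zpow_eq_one {m : ℕ} (hm : 1 ≤ m) {n : ℤ} (h : surfaceRelator m ^ n = 1) : n = 0 := by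
  have := congrArg (rho m) h
  rw [map_zpow, rho_sr, map_one, ← zpow_natCast, ← zpow_mul] at this
  have := MC_zpow_eq_one this
  have hm' : (m : ℤ) ≠ 0 := by positivity
  exact by
    rcases mul_eq_zero.mp this with h | h
    · exact absurd h hm'
    · exact h

/-- injectivity of `zpowersHom` at `wcomm` -/
lemma zpowersHom_sr_injective {m : ℕ} (hm : 1 ≤ m) :
    Function.Injective (zpowersHom (FreeGroup (Fin (2*m))) (surfaceRelator m)) := by
  intro x y hxy
  have : surfaceRelator m ^ (x.toAdd - y.toAdd) = 1 := by
    rw [zpow_sub]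
    simp only [zpowersHom_apply] at hxy
    rw [hxy, mul_inv_cancel]
  have := sr_zpow_eq_one hm this
  have : x.toAdd = y.toAdd := by omega
  exact Multiplicative.toAdd.injective this

/-- same, for inverse element -/
lemma zpowersHom_inv_injective {G : Type*} [Group G] {w : G}
    (h : Function.Injective (zpowersHom G w)) :
    Function.Injective (zpowersHom G w⁻¹) := by
  intro x y hxy
  simp only [zpowersHom_apply, inv_zpow] at hxy
  have : w ^ (x.toAdd) = w ^ (y.toAdd) := by
    have := congrArg (·⁻¹) hxy; simpa using this
  have := h (a₁ := x) (a₂ := y) (by simpa using this)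
  exact this

/-- the exponent-sum homomorphism at generator `i₀` -/
def expSum {N : ℕ} (i₀ : Fin N) : FreeGroup (Fin N) →* Multiplicative ℤ :=
  FreeGroup.lift (fun j => if j = i₀ then Multiplicative.ofAdd (1:ℤ) else 1)

lemma avoid_cosets {N : ℕ} (w : FreeGroup (Fin N)) (i₀ : Fin N)
    (hw : expSum i₀ w = 1) (x : FreeGroup (Fin N)) :
    ∃ t, t ∉ (zpowersHom _ w).range ∧ t * x ∉ (zpowersHom _ w).range := by
  set α := expSum i₀
  have hrange : ∀ t, t ∈ (zpowersHom _ w).range → α t = 1 := by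
    rintro t ⟨n, rfl⟩
    simp only [zpowersHom_apply, map_zpow, hw, one_zpow]
  set e : ℤ := (α x).toAdd with he
  refine ⟨(FreeGroup.of i₀) ^ ((e.natAbs : ℤ) + 1), fun h => ?_, fun h => ?_⟩
  · have := hrange _ h
    rw [map_zpow] at this
    have hof : α (FreeGroup.of i₀) = Multiplicative.ofAdd (1:ℤ) := by
      simp [α, expSum, FreeGroup.lift_apply_of]
    rw [hof] at this
    have h2 : ((e.natAbs : ℤ) + 1) = 0 := by
      have h3 := congrArg Multiplicative.toAdd this
      rw [toAdd_zpow, toAdd_ofAdd, toAdd_one, smul_eq_mul, mul_one] at h3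
      exact h3
    omega
  · have := hrange _ h
    rw [map_mul, map_zpow] at this
    have hof : α (FreeGroup.of i₀) = Multiplicative.ofAdd (1:ℤ) := by
      simp [α, expSum, FreeGroup.lift_apply_of]
    rw [hof] at this
    have h2 : ((e.natAbs : ℤ) + 1) + e = 0 := by
      have h3 := congrArg Multiplicative.toAdd this
      rw [toAdd_mul, toAdd_zpow, toAdd_ofAdd, toAdd_one, smul_eq_mul, mul_one, ← he] at h3
      exact h3
    omega



open Monoid Monoid.PushoutI Monoid.CoprodI


variable {ι : Type*} {G : ι → Type*} [∀ i, Group (G i)] {H : Type*} [Group H]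
  {φ : ∀ i, H →* G i}

/-- map a letter to the pushout -/
def lp (φ : ∀ i, H →* G i) (p : Σ i, G i) : PushoutI φ := PushoutI.of p.1 p.2

/-- product of a list of letters in the pushout -/
def prodL (φ : ∀ i, H →* G i) (L : List (Σ i, G i)) : PushoutI φ := (L.map (lp φ)).prod

lemma prodL_append (L1 L2 : List (Σ i, G i)) :
    prodL φ (L1 ++ L2) = prodL φ L1 * prodL φ L2 := by
  simp [prodL]

lemma prodL_cons (p : Σ i, G i) (L : List (Σ i, G i)) :
    prodL φ (p :: L) = lp φ p * prodL φ L := by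
  simp [prodL]

/-- letterwise inverse, reversed -/
def invR (L : List (Σ i, G i)) : List (Σ i, G i) :=
  (L.map (fun p => ⟨p.1, p.2⁻¹⟩)).reverse

lemma invR_cons (p : Σ i, G i) (L : List (Σ i, G i)) :
    invR (p :: L) = invR L ++ [⟨p.1, p.2⁻¹⟩] := by
  simp [invR]

lemma prodL_invR (L : List (Σ i, G i)) :
    prodL φ (invR L) = (prodL φ L)⁻¹ := by
  induction L with
  | nil => simp [prodL, invR]
  | cons p L ih =>
      rw [invR_cons, prodL_append, prodL_cons, ih]
      simp [prodL, lp, mul_comm]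

lemma mem_invR {p : Σ i, G i} {L : List (Σ i, G i)} (h : p ∈ invR L) :
    ∃ q ∈ L, p = ⟨q.1, q.2⁻¹⟩ := by
  rw [invR, List.mem_reverse, List.mem_map] at h
  obtain ⟨q, hq, rfl⟩ := h
  exact ⟨q, hq, rfl⟩

lemma chain'_invR {L : List (Σ i, G i)}
    (h : L.Chain' (fun p q => p.1 ≠ q.1)) :
    (invR L).Chain' (fun p q => p.1 ≠ q.1) := by
  rw [invR, List.Chain', List.isChain_reverse]
  refine (List.isChain_map _).mpr ?_
  exact h.imp (fun a b hab => by exact fun hh => hab hh.symm)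

lemma head?_invR (L : List (Σ i, G i)) :
    (invR L).head? = L.getLast?.map (fun p => ⟨p.1, p.2⁻¹⟩) := by
  rw [invR, List.head?_reverse, List.getLast?_map]

lemma getLast?_invR (L : List (Σ i, G i)) :
    (invR L).getLast? = L.head?.map (fun p => ⟨p.1, p.2⁻¹⟩) := by
  rw [invR, List.getLast?_reverse, List.head?_map]

lemma ofCoprodI_word_prod (W : Word G) :
    ofCoprodI (φ := φ) W.prod = prodL φ W.toList := by
  rw [Word.prod, MonoidHom.map_list_prod, List.map_map]
  congr 1

/-- a nonempty reduced word cannot have product 1 -/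
lemma no_reduced_cons (hφ : ∀ i, Function.Injective (φ i))
    (p : Σ i, G i) (ℓ : List (Σ i, G i))
    (hnr : ∀ q ∈ p :: ℓ, q.2 ∉ (φ q.1).range)
    (hchain : (p :: ℓ).Chain' (fun a b => a.1 ≠ b.1))
    (hprod : prodL φ (p :: ℓ) = 1) : False := by
  classical
  set Wd : Word G := ⟨p :: ℓ, fun q hq h1 => hnr q hq (h1 ▸ Subgroup.one_mem _), hchain⟩
    with hWd
  have hRed : PushoutI.Reduced φ Wd := fun q hq => hnr q hq
  have hmem : ofCoprodI (φ := φ) Wd.prod ∈ (PushoutI.base φ).range := by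
    rw [ofCoprodI_word_prod]
    show prodL φ (p :: ℓ) ∈ _
    rw [hprod]
    exact Subgroup.one_mem _
  have := hRed.eq_empty_of_mem_range hφ hmem
  have : Wd.toList = ([] : List (Σ i, G i)) := congrArg Word.toList this
  simp [hWd] at this

/-- key lemma : the center of an amalgam is contained in the image of the base group,
provided each map `φ i` is injective and one can avoid any two right cosets of its range. -/
theorem center_le_base_range
    (hφ : ∀ i, Function.Injective (φ i))
    (hne : ∀ i : ι, ∃ j, j ≠ i)
    (havoid : ∀ i (x : G i), ∃ t, t ∉ (φ i).range ∧ t * x ∉ (φ i).range) :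
    Subgroup.center (PushoutI φ) ≤ (PushoutI.base φ).range := by
  classical
  obtain ⟨d⟩ := NormalWord.transversal_nonempty φ hφ
  intro z hz
  rw [Subgroup.mem_center_iff] at hz
  -- normal form of z
  set w : NormalWord d := NormalWord.equiv z with hw
  have hzprod : z = w.prod := (NormalWord.equiv.symm_apply_apply z).symm
  -- letters of the normal form are not in the range
  have hred : ∀ p : (Σ i, G i), p ∈ w.toList → p.2 ∉ (φ p.1).range := by
    rintro ⟨i, g⟩ hp hgr
    have hgset : g ∈ d.set i := w.normalized i g hp
    have hg1 : g ≠ 1 := w.ne_one ⟨i, g⟩ hp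
    -- complement argument
    have hcompl := d.compl i
    have := hcompl.1 (a₁ := (⟨⟨g, hgr⟩, ⟨1, d.one_mem i⟩⟩ : ((φ i).range : Set (G i)) × d.set i))
      (a₂ := (⟨⟨1, Subgroup.one_mem _⟩, ⟨g, hgset⟩⟩ : ((φ i).range : Set (G i)) × d.set i))
      (by simp)
    have : g = (1 : G i) := congrArg (fun x => (x.1 : G i)) this
    exact hg1 this
  -- decompose z
  have hzeq : z = PushoutI.base φ w.head * prodL φ w.toList := by
    rw [hzprod, NormalWord.prod]
    congr 1
    show ofCoprodI w.toWord.prod = _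
    rw [Word.prod, MonoidHom.map_list_prod, List.map_map]
    congr 1
  rcases hL : w.toList with _ | ⟨⟨i₁, g₁⟩, T⟩
  · rw [hL] at hzeq
    simp only [prodL, List.map_nil, List.prod_nil, mul_one] at hzeq
    exact ⟨w.head, hzeq.symm⟩
  · exfalso
    rw [hL] at hzeq hred
    set L : List (Σ i, G i) := ⟨i₁, g₁⟩ :: T with hLdef
    have hchain : L.Chain' (fun a b => a.1 ≠ b.1) := hL ▸ w.chain_ne
    set h : H := w.head
    set W : PushoutI φ := prodL φ L with hWdef
    -- the key consequence of centrality
    have hcomm : ∀ (j) (t : G j),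
        W * PushoutI.of j t = PushoutI.of j ((φ j h)⁻¹ * t * (φ j h)) * W := by
      intro j t
      have h1 := hz (PushoutI.of j t)
      rw [hzeq] at h1
      have hbase : PushoutI.base φ h = PushoutI.of j (φ j h) :=
        (PushoutI.of_apply_eq_base φ j h).symm
      rw [hbase] at h1
      have h1' : PushoutI.of j t * PushoutI.of j (φ j h) * W =
          PushoutI.of j (φ j h) * W * PushoutI.of j t := by
        rw [mul_assoc]; exact h1
      simp only [map_mul, map_inv]
      calc W * PushoutI.of j t
          = (PushoutI.of j (φ j h))⁻¹ * (PushoutI.of j (φ j h) * W * PushoutI.of j t) := by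
            group
        _ = (PushoutI.of j (φ j h))⁻¹ * (PushoutI.of j t * PushoutI.of j (φ j h) * W) := by
            rw [h1']
        _ = (PushoutI.of j (φ j h))⁻¹ * PushoutI.of j t * PushoutI.of j (φ j h) * W := by
            group
    -- conjugates of non-range elements are not in the range
    have hconj : ∀ (j) (t : G j), t ∉ (φ j).range →
        (φ j h)⁻¹ * t * (φ j h) ∉ (φ j).range := by
      intro j t ht hmem
      apply ht
      have heq : t = (φ j h) * ((φ j h)⁻¹ * t * (φ j h)) * (φ j h)⁻¹ := by group
      rw [heq]
      exact Subgroup.mul_mem _ (Subgroup.mul_mem _ ⟨h, rfl⟩ hmem)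
        (Subgroup.inv_mem _ ⟨h, rfl⟩)
    -- last letter
    have hLne : L ≠ [] := by simp [hLdef]
    set pN : Σ i, G i := L.getLast hLne with hpN
    have hlast : L.getLast? = some pN := List.getLast?_eq_getLast hLne
    have hpNmem : pN ∈ L := List.getLast_mem hLne
    by_cases hii : i₁ = pN.1
    · -- Case A : first and last letters in the same factor
      obtain ⟨j, hj⟩ := hne i₁
      obtain ⟨t', ht', -⟩ := havoid j 1
      set t'' : G j := (φ j h)⁻¹ * t' * (φ j h) with ht''def
      have ht''r : t'' ∉ (φ j).range := hconj j t' ht'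
      set M : List (Σ i, G i) := invR (⟨j, t''⟩ :: L) with hMdef
      apply no_reduced_cons hφ ⟨i₁, g₁⟩ (T ++ ⟨j, t'⟩ :: M)
      · -- letters not in range
        intro x hx
        rcases List.mem_cons.mp hx with rfl | hx
        · exact hred _ (by simp [hLdef])
        · rcases List.mem_append.mp hx with hx | hx
          · exact hred _ (by simp [hLdef, hx])
          · rcases List.mem_cons.mp hx with rfl | hx
            · exact ht'
            · obtain ⟨y, hy, rfl⟩ := mem_invR (hMdef ▸ hx)
              rcases List.mem_cons.mp hy with rfl | hy
              · simpa using fun hc => ht''r ((Subgroup.inv_mem_iff _).mp hc)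
              · simpa using fun hc => hred y hy ((Subgroup.inv_mem_iff _).mp hc)
      · -- chain condition
        have hchainM : M.Chain' (fun a b => a.1 ≠ b.1) := by
          refine chain'_invR (List.isChain_cons.mpr ⟨?_, hchain⟩)
          intro y hy
          rw [hLdef, List.head?_cons, Option.mem_def, Option.some_inj] at hy
          subst hy
          exact fun hc => hj hc
        have hheadM : M.head? = some ⟨pN.1, pN.2⁻¹⟩ := by
          rw [hMdef, head?_invR]
          have h6 : (⟨j, t''⟩ :: L).getLast? = some pN := by
            rw [hLdef, List.getLast?_cons_cons, ← hLdef, hlast]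
          rw [h6, Option.map_some]
        have hch : ((⟨i₁, g₁⟩ :: T) ++ ⟨j, t'⟩ :: M).Chain' (fun a b => a.1 ≠ b.1) := by
          rw [List.Chain', List.isChain_append]
          refine ⟨hLdef ▸ hchain, ?_, ?_⟩
          · rw [List.isChain_cons]
            refine ⟨?_, hchainM⟩
            intro y hy
            rw [hheadM, Option.mem_def, Option.some_inj] at hy
            subst hy
            exact fun hc => hj (hc.trans hii.symm)
          · intro x hx y hy
            rw [← hLdef, hlast, Option.mem_def, Option.some_inj] at hx
            subst hx
            rw [List.head?_cons, Option.mem_def, Option.some_inj] at hy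
            subst hy
            exact fun hc => hj (hc.symm.trans hii.symm)
        simpa using hch
      · -- product is 1
        have hprodM : prodL φ M = (PushoutI.of j t'' * W)⁻¹ := by
          rw [hMdef, prodL_invR, prodL_cons]
          rfl
        have hpr : prodL φ ((⟨i₁, g₁⟩ :: T) ++ ⟨j, t'⟩ :: M) = 1 := by
          rw [prodL_append, prodL_cons ⟨j, t'⟩ M, hprodM, ← hLdef, ← hWdef]
          rw [show lp φ (⟨j, t'⟩ : Σ i, G i) = PushoutI.of j t' from rfl]
          rw [← mul_assoc, hcomm j t', ← ht''def]
          group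
        simpa using hpr
    · -- Case B : first and last letters in different factors
      have hTne : T ≠ [] := by
        intro hT
        apply hii
        have h5 : L.getLast? = some ⟨i₁, g₁⟩ := by rw [hLdef, hT]; rfl
        rw [hlast, Option.some_inj] at h5
        rw [h5]
      have hgetT : L.getLast? = T.getLast? := by
        rw [hLdef, show (⟨i₁, g₁⟩ :: T : List (Σ i, G i)) = [⟨i₁, g₁⟩] ++ T from rfl]
        exact List.getLast?_append_of_ne_nil _ hTne
      obtain ⟨t'', ht''r, ht''g⟩ := havoid i₁ g₁
      set t : G i₁ := (φ i₁ h) * t'' * (φ i₁ h)⁻¹ with htdef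
      have hback : (φ i₁ h)⁻¹ * t * (φ i₁ h) = t'' := by rw [htdef]; group
      have htr : t ∉ (φ i₁).range := by
        intro hmem
        apply ht''r
        rw [← hback]
        exact Subgroup.mul_mem _ (Subgroup.mul_mem _ (Subgroup.inv_mem _ ⟨h, rfl⟩) hmem)
          ⟨h, rfl⟩
      apply no_reduced_cons hφ ⟨i₁, t'' * g₁⟩ (T ++ ⟨i₁, t⁻¹⟩ :: invR L)
      · intro x hx
        rcases List.mem_cons.mp hx with rfl | hx
        · exact ht''g
        · rcases List.mem_append.mp hx with hx | hx
          · exact hred _ (by simp [hLdef, hx])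
          · rcases List.mem_cons.mp hx with rfl | hx
            · simpa using fun hc => htr ((Subgroup.inv_mem_iff _).mp hc)
            · obtain ⟨y, hy, rfl⟩ := mem_invR hx
              simpa using fun hc => hred y hy ((Subgroup.inv_mem_iff _).mp hc)
      · -- chain condition
        have hchainT : T.Chain' (fun a b => a.1 ≠ b.1) :=
          (List.isChain_cons.mp (hLdef ▸ hchain)).2
        have hheadT : ∀ y ∈ T.head?, i₁ ≠ y.1 :=
          (List.isChain_cons.mp (hLdef ▸ hchain)).1
        have hheadInv : (invR L).head? = some ⟨pN.1, pN.2⁻¹⟩ := by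
          rw [head?_invR, hlast, Option.map_some]
        rw [List.Chain', List.isChain_cons]
        constructor
        · intro y hy
          rw [List.head?_append_of_ne_nil _ hTne] at hy
          exact hheadT y hy
        · rw [List.isChain_append]
          refine ⟨hchainT, ?_, ?_⟩
          · rw [List.isChain_cons]
            refine ⟨?_, chain'_invR hchain⟩
            intro y hy
            rw [hheadInv, Option.mem_def, Option.some_inj] at hy
            subst hy
            exact hii
          · intro x hx y hy
            have hxL : pN = x := by
              have h7 : some pN = some x := by
                rw [← hlast, hgetT]
                exact Option.mem_def.mp hx
              exact Option.some_inj.mp h7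
            subst hxL
            rw [List.head?_cons, Option.mem_def, Option.some_inj] at hy
            subst hy
            exact fun hc => hii hc.symm
      · -- product is 1
        have hW' : W = lp φ ⟨i₁, g₁⟩ * prodL φ T := by rw [hWdef, hLdef, prodL_cons]
        have h1 : lp φ (⟨i₁, t'' * g₁⟩ : Σ i, G i) =
            PushoutI.of i₁ t'' * lp φ ⟨i₁, g₁⟩ := by
          show PushoutI.of i₁ (t'' * g₁) = _
          rw [map_mul]
          rfl
        have hsplit : prodL φ (⟨i₁, t'' * g₁⟩ :: (T ++ ⟨i₁, t⁻¹⟩ :: invR L)) =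
            PushoutI.of i₁ t'' * W * PushoutI.of i₁ t⁻¹ * W⁻¹ := by
          rw [prodL_cons, prodL_append, prodL_cons ⟨i₁, t⁻¹⟩ (invR L), prodL_invR, h1,
            ← hWdef, hW']
          rw [show lp φ (⟨i₁, t⁻¹⟩ : Σ i, G i) = PushoutI.of i₁ t⁻¹ from rfl]
          group
        rw [hsplit]
        have hc := hcomm i₁ t
        rw [hback] at hc
        rw [← hc, mul_assoc W, ← map_mul, mul_inv_cancel, map_one, mul_one, mul_inv_cancel]



open Monoid Monoid.PushoutI

lemma comm_congr {G : Type*} [Group G] {a b c d : G} (h1 : a = c) (h2 : b = d) :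
    ⁅a, b⁆ = ⁅c, d⁆ := by rw [h1, h2]

def cAB : FreeGroup (Fin 2) :=
  ⁅FreeGroup.of (⟨0, by omega⟩ : Fin 2), FreeGroup.of (⟨1, by omega⟩ : Fin 2)⁆

section Glue

variable (m : ℕ)

/-- the two factor groups, indexed by `Bool` -/
abbrev Gb (b : Bool) : Type := FreeGroup (Fin (cond b 2 (2 * m)))

/-- the distinguished elements generating the amalgamated subgroups -/
def wb : ∀ b : Bool, Gb m b
  | true => cAB
  | false => (surfaceRelator m)⁻¹

/-- the maps from the base group ℤ -/
def φb : ∀ b : Bool, Multiplicative ℤ →* Gb m b := fun b => zpowersHom _ (wb m b)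

abbrev P : Type := PushoutI (φb m)

/-- the map on generators defining σ -/
def Fgen (k : Fin (2 * (m + 1))) : P m :=
  if h2 : k.1 < 2 then PushoutI.of (φ := φb m) true (FreeGroup.of (⟨k.1, h2⟩ : Fin 2))
  else PushoutI.of (φ := φb m) false
    (FreeGroup.of (⟨k.1 - 2, by have := k.2; omega⟩ : Fin (2 * m)))

lemma Fgen_lt (k : ℕ) (hk : k < 2 * (m + 1)) (h2 : k < 2) :
    Fgen m ⟨k, hk⟩ = PushoutI.of (φ := φb m) true (FreeGroup.of (⟨k, h2⟩ : Fin 2)) := by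
  rw [Fgen, dif_pos h2]

lemma Fgen_ge (k : ℕ) (hk : k < 2 * (m + 1)) (h2 : ¬ k < 2) :
    Fgen m ⟨k, hk⟩ = PushoutI.of (φ := φb m) false
      (FreeGroup.of (⟨k - 2, by omega⟩ : Fin (2 * m))) := by
  rw [Fgen, dif_neg h2]

lemma lift_relator :
    FreeGroup.lift (Fgen m) (surfaceRelator (m + 1)) =
      PushoutI.of (φ := φb m) true cAB *
        PushoutI.of (φ := φb m) false (surfaceRelator m) := by
  rw [surfaceRelator, MonoidHom.map_list_prod, List.map_ofFn, List.ofFn_succ, List.prod_cons]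
  congr 1
  · -- head
    simp only [Function.comp_apply]
    rw [map_commutatorElement, FreeGroup.lift_apply_of, FreeGroup.lift_apply_of]
    rw [Fgen_lt m _ _ (by simp), Fgen_lt m _ _ (by simp)]
    rw [cAB, map_commutatorElement]
    congr 2 <;> exact congrArg FreeGroup.of (Fin.ext (by simp))
  · -- tail
    rw [surfaceRelator, MonoidHom.map_list_prod, List.map_ofFn]
    refine congrArg List.prod (congrArg List.ofFn ?_)
    funext i
    simp only [Function.comp_apply]
    rw [map_commutatorElement, FreeGroup.lift_apply_of, FreeGroup.lift_apply_of]
    rw [Fgen_ge m _ _ (by simp only [Fin.val_succ]; omega),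
        Fgen_ge m _ _ (by simp only [Fin.val_succ]; omega), map_commutatorElement]
    congr 2 <;> exact congrArg FreeGroup.of (Fin.ext (by simp only [Fin.val_succ]; omega))

lemma relator_eq_one :
    (PresentedGroup.mk {surfaceRelator (m+1)} (surfaceRelator (m + 1)) :
      SurfaceGroup (m + 1)) = 1 := by
  have h : surfaceRelator (m+1) ∈ Subgroup.normalClosure {surfaceRelator (m+1)} :=
    Subgroup.subset_normalClosure rfl
  exact (QuotientGroup.eq_one_iff _).mpr h

lemma phib_true : φb m true (Multiplicative.ofAdd 1) = cAB := by
  rw [φb, zpowersHom_apply, toAdd_ofAdd, zpow_one]; rfl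

lemma phib_false : φb m false (Multiplicative.ofAdd 1) = (surfaceRelator m)⁻¹ := by
  rw [φb, zpowersHom_apply, toAdd_ofAdd, zpow_one]; rfl

/-- the image of the relator is trivial in the pushout -/
lemma Fgen_relator_one :
    ∀ r ∈ ({surfaceRelator (m+1)} : Set (FreeGroup (Fin (2 * (m+1))))),
      FreeGroup.lift (Fgen m) r = 1 := by
  intro r hr
  rw [Set.mem_singleton_iff] at hr
  subst hr
  rw [lift_relator]
  have h1 : PushoutI.of (φ := φb m) true cAB =
      PushoutI.base (φb m) (Multiplicative.ofAdd 1) := by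
    rw [← phib_true m, PushoutI.of_apply_eq_base]
  have h2 : PushoutI.of (φ := φb m) false (surfaceRelator m) =
      (PushoutI.base (φb m) (Multiplicative.ofAdd 1))⁻¹ := by
    rw [← PushoutI.of_apply_eq_base (φb m) false, phib_false m, map_inv, inv_inv]
  rw [h1, h2, mul_inv_cancel]

/-- the homomorphism from the surface group to the pushout -/
def σh : SurfaceGroup (m + 1) →* P m :=
  PresentedGroup.toGroup (f := Fgen m) (Fgen_relator_one m)

/-- generator embeddings for the reverse map -/
def emb : ∀ b : Bool, Fin (cond b 2 (2 * m)) → Fin (2 * (m + 1))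
  | true, i => ⟨i.1, by have : i.1 < 2 := i.2; omega⟩
  | false, i => ⟨i.1 + 2, by have : i.1 < 2 * m := i.2; omega⟩

/-- the distinguished element of the surface group -/
def z₀ : SurfaceGroup (m + 1) :=
  ⁅(PresentedGroup.of (⟨0, by omega⟩ : Fin (2 * (m+1))) : SurfaceGroup (m+1)),
    PresentedGroup.of (⟨1, by omega⟩ : Fin (2 * (m+1)))⁆

/-- factor maps for the reverse homomorphism -/
def fS (b : Bool) : Gb m b →* SurfaceGroup (m + 1) :=
  FreeGroup.lift (fun i => PresentedGroup.of (emb m b i))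

lemma fS_true_cAB : fS m true cAB = z₀ m := by
  rw [fS, cAB, map_commutatorElement, FreeGroup.lift_apply_of, FreeGroup.lift_apply_of, z₀]
  exact comm_congr (congrArg PresentedGroup.of (Fin.ext rfl))
    (congrArg PresentedGroup.of (Fin.ext rfl))

/-- the common list of commutators -/
def tailList : List (SurfaceGroup (m+1)) :=
  List.ofFn fun i : Fin m =>
    ⁅(PresentedGroup.of (⟨2 * i.1 + 2, by omega⟩ : Fin (2 * (m+1))) : SurfaceGroup (m+1)),
      PresentedGroup.of (⟨2 * i.1 + 3, by omega⟩ : Fin (2 * (m+1)))⁆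

lemma fS_false_sr : fS m false (surfaceRelator m) = (tailList m).prod := by
  have hsr : surfaceRelator m = (List.ofFn fun i : Fin m =>
      ⁅FreeGroup.of (⟨2 * i.1, by omega⟩ : Fin (2 * m)),
        FreeGroup.of (⟨2 * i.1 + 1, by omega⟩ : Fin (2 * m))⁆).prod := rfl
  rw [hsr, MonoidHom.map_list_prod, List.map_ofFn, tailList]
  refine congrArg List.prod (congrArg List.ofFn ?_)
  funext i
  simp only [Function.comp_apply]
  rw [map_commutatorElement, fS, FreeGroup.lift_apply_of, FreeGroup.lift_apply_of]
  exact comm_congr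
    (congrArg PresentedGroup.of (Fin.ext (by simp only [emb]; try omega)))
    (congrArg PresentedGroup.of (Fin.ext (by simp only [emb]; try omega)))

lemma mk_sr : (PresentedGroup.mk {surfaceRelator (m+1)} (surfaceRelator (m + 1)) :
    SurfaceGroup (m + 1)) = z₀ m * (tailList m).prod := by
  have hof : ∀ (x : Fin (2 * (m+1))),
      (PresentedGroup.mk {surfaceRelator (m+1)} (FreeGroup.of x) : SurfaceGroup (m+1)) =
        PresentedGroup.of x := fun _ => rfl
  show (PresentedGroup.mk {surfaceRelator (m+1)} ((List.ofFn fun i : Fin (m + 1) =>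
      ⁅FreeGroup.of (⟨2 * i.1, by omega⟩ : Fin (2 * (m + 1))),
        FreeGroup.of (⟨2 * i.1 + 1, by omega⟩ : Fin (2 * (m + 1)))⁆).prod) :
      SurfaceGroup (m + 1)) = z₀ m * (tailList m).prod
  rw [MonoidHom.map_list_prod, List.map_ofFn, List.ofFn_succ, List.prod_cons]
  congr 1
  all_goals try (
    rw [tailList]
    refine congrArg List.prod (congrArg List.ofFn ?_)
    funext i
    simp only [Function.comp_apply]
    rw [map_commutatorElement, hof, hof]
    exact comm_congr
      (congrArg PresentedGroup.of (Fin.ext (by simp only [Fin.val_succ]; try omega)))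
      (congrArg PresentedGroup.of (Fin.ext (by simp only [Fin.val_succ]; try omega))))
  all_goals (
    simp only [Function.comp_apply]
    rw [map_commutatorElement, hof, hof, z₀]
    exact comm_congr (congrArg PresentedGroup.of (Fin.ext (by simp)))
      (congrArg PresentedGroup.of (Fin.ext (by simp))))

lemma fS_false_relator : fS m false (surfaceRelator m) = (z₀ m)⁻¹ := by
  have hrel := relator_eq_one m
  rw [mk_sr] at hrel
  rw [fS_false_sr]
  exact (inv_eq_of_mul_eq_one_right hrel).symm

/-- the homomorphism from the pushout to the surface group -/
def τh : P m →* SurfaceGroup (m + 1) :=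
  PushoutI.lift (fS m) (zpowersHom _ (z₀ m)) (by
    intro b
    apply MonoidHom.ext_mint
    rw [MonoidHom.comp_apply]
    simp only [zpowersHom_apply, toAdd_ofAdd, zpow_one]
    show fS m b (φb m b (Multiplicative.ofAdd 1)) = z₀ m
    cases b with
    | true => rw [phib_true m]; exact fS_true_cAB m
    | false => rw [phib_false m, map_inv, fS_false_relator, inv_inv])

lemma τσ_id : ∀ x : SurfaceGroup (m + 1), τh m (σh m x) = x := by
  have hc : (τh m).comp (σh m) = MonoidHom.id _ := by
    apply PresentedGroup.ext
    intro k
    rw [MonoidHom.comp_apply, MonoidHom.id_apply]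
    show τh m (PresentedGroup.toGroup (f := Fgen m) (Fgen_relator_one m) (PresentedGroup.of k)) = _
    rw [PresentedGroup.toGroup.of]
    by_cases h2 : k.1 < 2
    · rw [show (k : Fin (2 * (m+1))) = ⟨k.1, k.2⟩ from rfl, Fgen_lt m _ _ h2]
      rw [τh, PushoutI.lift_of]
      show PresentedGroup.of (emb m true _) = _
      exact congrArg PresentedGroup.of (Fin.ext rfl)
    · rw [show (k : Fin (2 * (m+1))) = ⟨k.1, k.2⟩ from rfl, Fgen_ge m _ _ h2]
      rw [τh, PushoutI.lift_of]
      show PresentedGroup.of (emb m false _) = _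
      refine congrArg PresentedGroup.of (Fin.ext ?_)
      show k.1 - 2 + 2 = k.1
      omega
  intro x
  exact DFunLike.congr_fun hc x

lemma στ_id : ∀ x : P m, σh m (τh m x) = x := by
  have hc : (σh m).comp (τh m) = MonoidHom.id _ := by
    apply PushoutI.hom_ext_nonempty
    intro b
    apply FreeGroup.ext_hom
    intro i
    simp only [MonoidHom.comp_apply, MonoidHom.id_apply]
    rw [τh, PushoutI.lift_of]
    show σh m ((FreeGroup.lift fun i => PresentedGroup.of (emb m b i)) (FreeGroup.of i)) = _
    rw [FreeGroup.lift_apply_of]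
    show PresentedGroup.toGroup (f := Fgen m) (Fgen_relator_one m)
      (PresentedGroup.of (emb m b i)) = _
    rw [PresentedGroup.toGroup.of]
    cases b with
    | true =>
        have h : emb m true i = ⟨i.1, by have : i.1 < 2 := i.2; omega⟩ := rfl
        rw [h, Fgen_lt m _ _ (i.2)]
        exact congrArg (PushoutI.of true) (congrArg FreeGroup.of (Fin.ext rfl))
    | false =>
        have h : emb m false i = ⟨i.1 + 2, by have : i.1 < 2 * m := i.2; omega⟩ := rfl
        rw [h, Fgen_ge m _ _ (by omega)]
        exact congrArg (PushoutI.of false)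
          (congrArg FreeGroup.of (Fin.ext (show i.1 + 2 - 2 = i.1 by omega)))
  intro x
  exact DFunLike.congr_fun hc x

end Glue


noncomputable def rhoc : FreeGroup (Fin 2) →* SL2 :=
  FreeGroup.lift (fun i => if i.1 = 0 then MA else MB)

lemma rhoc_cAB : rhoc cAB = MC := by
  rw [cAB, map_commutatorElement]
  rw [show rhoc (FreeGroup.of (⟨0, by omega⟩ : Fin 2)) = MA by simp [rhoc]]
  rw [show rhoc (FreeGroup.of (⟨1, by omega⟩ : Fin 2)) = MB by simp [rhoc]]
  rfl

lemma cAB_zpow_eq_one {n : ℤ} (h : cAB ^ n = 1) : n = 0 := by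
  have h2 := congrArg rhoc h
  rw [map_zpow, rhoc_cAB, map_one] at h2
  exact MC_zpow_eq_one h2

lemma cAB_commute {n : ℤ}
    (h : Commute (cAB ^ n) (FreeGroup.of (⟨0, by omega⟩ : Fin 2))) : n = 0 := by
  by_contra hn
  apply MC_zpow_ne_commute hn
  have h2 := h.map rhoc
  rw [map_zpow, rhoc_cAB] at h2
  rw [show rhoc (FreeGroup.of (⟨0, by omega⟩ : Fin 2)) = MA by simp [rhoc]] at h2
  exact h2

lemma zpowersHom_cAB_injective : Function.Injective (zpowersHom (FreeGroup (Fin 2)) cAB) := by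
  intro x y hxy
  have h1 : cAB ^ (x.toAdd - y.toAdd) = 1 := by
    rw [_root_.zpow_sub]
    simp only [zpowersHom_apply] at hxy
    rw [hxy, mul_inv_cancel]
  have h2 := cAB_zpow_eq_one h1
  exact Multiplicative.toAdd.injective (by omega)

lemma comm_hom_relator {k : ℕ} {Gc : Type*} [CommGroup Gc]
    (α : FreeGroup (Fin (2 * k)) →* Gc) : α (surfaceRelator k) = 1 := by
  have hsr : surfaceRelator k = (List.ofFn fun i : Fin k =>
      ⁅FreeGroup.of (⟨2 * i.1, by omega⟩ : Fin (2 * k)),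
        FreeGroup.of (⟨2 * i.1 + 1, by omega⟩ : Fin (2 * k))⁆).prod := rfl
  rw [hsr, MonoidHom.map_list_prod, List.map_ofFn]
  have hfun : (⇑α ∘ fun i : Fin k =>
      ⁅FreeGroup.of (⟨2 * i.1, by omega⟩ : Fin (2 * k)),
        FreeGroup.of (⟨2 * i.1 + 1, by omega⟩ : Fin (2 * k))⁆) = fun _ => (1 : Gc) := by
    funext i
    rw [Function.comp_apply, map_commutatorElement]
    exact commutatorElement_eq_one_iff_commute.mpr (mul_comm _ _)
  rw [hfun, List.ofFn_const, List.prod_replicate, one_pow]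

lemma expSum_cAB : expSum (⟨0, by omega⟩ : Fin 2) cAB = 1 := by
  rw [cAB, map_commutatorElement]
  exact commutatorElement_eq_one_iff_commute.mpr (mul_comm _ _)

end SGaux

/-- For every `g ≥ 2`, the genus-`g` surface group has trivial center. -/
theorem surfaceGroup_center_trivial (g : ℕ) (hg : 2 ≤ g) :
    Subgroup.center (SurfaceGroup g) = ⊥ := by
  obtain ⟨m, rfl⟩ : ∃ m, g = m + 1 := ⟨g - 1, by omega⟩
  have hm : 1 ≤ m := by omega
  have hφinj : ∀ b, Function.Injective (SGaux.φb m b) := by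
    intro b
    cases b with
    | true => exact SGaux.zpowersHom_cAB_injective
    | false => exact SGaux.zpowersHom_inv_injective (SGaux.zpowersHom_sr_injective hm)
  have hne : ∀ b : Bool, ∃ c : Bool, c ≠ b := fun b => ⟨!b, by cases b <;> simp⟩
  have havoid : ∀ b (x : SGaux.Gb m b),
      ∃ t, t ∉ (SGaux.φb m b).range ∧ t * x ∉ (SGaux.φb m b).range := by
    intro b x
    cases b with
    | true => exact SGaux.avoid_cosets SGaux.cAB ⟨0, by omega⟩ SGaux.expSum_cAB x
    | false =>
        refine SGaux.avoid_cosets ((surfaceRelator m)⁻¹) ⟨0, by omega⟩ ?_ x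
        rw [map_inv, SGaux.comm_hom_relator, inv_one]
  rw [eq_bot_iff]
  intro z hz
  rw [Subgroup.mem_bot]
  have hcent : SGaux.σh m z ∈ Subgroup.center (SGaux.P m) := by
    rw [Subgroup.mem_center_iff]
    intro p
    have hp : SGaux.σh m (SGaux.τh m p) = p := SGaux.στ_id m p
    rw [← hp, ← map_mul, ← map_mul]
    exact congrArg (SGaux.σh m) (Subgroup.mem_center_iff.mp hz (SGaux.τh m p))
  obtain ⟨n, hn⟩ := SGaux.center_le_base_range hφinj hne havoid hcent
  have hcomm0 := Subgroup.mem_center_iff.mp hcent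
      (Monoid.PushoutI.of (φ := SGaux.φb m) true (FreeGroup.of (⟨0, by omega⟩ : Fin 2)))
  rw [← hn, ← Monoid.PushoutI.of_apply_eq_base (SGaux.φb m) true n,
    ← map_mul, ← map_mul] at hcomm0
  have h3 := Monoid.PushoutI.of_injective hφinj true hcomm0
  have h4 : Multiplicative.toAdd n = 0 := by
    apply SGaux.cAB_commute (n := Multiplicative.toAdd n)
    have hφn : SGaux.φb m true n = SGaux.cAB ^ (Multiplicative.toAdd n) := rfl
    rw [hφn] at h3
    exact h3.symm
  have h5 : n = 1 := by
    have hh : n = Multiplicative.ofAdd (Multiplicative.toAdd n) := rfl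
    rw [hh, h4]
    rfl
  have h6 : SGaux.σh m z = 1 := by rw [← hn, h5, map_one]
  have h7 := SGaux.τσ_id m z
  rw [h6, map_one] at h7
  exact h7.symm
end

section
/- For every g ≥ 2 and every natural number k, the genus-g surface group Π_g is not isomorphic to the free group F_k: there is no group isomorphism Π_g ≃* F_k. -/
open scoped commutatorElement

/- ### Auxiliary development: counting homomorphisms into the dihedral group of order 8 -/

namespace SurfaceAux

abbrev D := DihedralGroup 4

/-- The central element `r²` of `D₄`. -/
def zc : D := DihedralGroup.r 2

lemma comm_mem : ∀ p : D × D, ⁅p.1, p.2⁆ = 1 ∨ ⁅p.1, p.2⁆ = zc := by decide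

lemma zc_inv : zc⁻¹ = zc := by decide
lemma zc_zc : zc * zc = 1 := by decide
lemma zc_ne_one : zc ≠ 1 := by decide

lemma card40 : (Finset.univ.filter (fun p : D × D => ⁅p.1, p.2⁆ = 1)).card = 40 := by decide
lemma card24 : (Finset.univ.filter (fun p : D × D => ¬⁅p.1, p.2⁆ = 1)).card = 24 := by decide

/-- Product of the commutators of a tuple of pairs. -/
def P (g : ℕ) (v : Fin g → D × D) : D :=
  (List.ofFn (fun i => ⁅(v i).1, (v i).2⁆)).prod

/-- Number of tuples of pairs whose commutator product is `w`. -/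
noncomputable def cnt (g : ℕ) (w : D) : ℕ := Nat.card {v : Fin g → D × D // P g v = w}

lemma P_cons (g : ℕ) (p : D × D) (v : Fin g → D × D) :
    P (g + 1) (Fin.cons p v) = ⁅p.1, p.2⁆ * P g v := by
  simp [P, List.ofFn_succ]

/-- Splitting off the first pair. -/
def splitEquiv (g : ℕ) (w : D) :
    {v : Fin (g + 1) → D × D // P (g + 1) v = w} ≃
      Σ p : D × D, {v : Fin g → D × D // P g v = ⁅p.1, p.2⁆⁻¹ * w} where
  toFun v := ⟨v.1 0, ⟨Fin.tail v.1, by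
    have h := v.2
    rw [← Fin.cons_self_tail v.1, P_cons] at h
    rw [eq_inv_mul_iff_mul_eq]
    exact h⟩⟩
  invFun x := ⟨Fin.cons x.1 x.2.1, by
    rw [P_cons, x.2.2]
    group⟩
  left_inv v := by
    apply Subtype.ext
    exact Fin.cons_self_tail v.1
  right_inv x := by
    rcases x with ⟨p, v, h⟩
    rfl

lemma cnt_succ (g : ℕ) (w : D) :
    cnt (g + 1) w = ∑ p : D × D, cnt g (⁅p.1, p.2⁆⁻¹ * w) := by
  rw [cnt, Nat.card_congr (splitEquiv g w), Nat.card_eq_fintype_card, Fintype.card_sigma]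
  refine Finset.sum_congr rfl fun p _ => ?_
  rw [cnt, Nat.card_eq_fintype_card]

lemma cnt_succ' (g : ℕ) (w : D) :
    cnt (g + 1) w = 40 * cnt g w + 24 * cnt g (zc * w) := by
  rw [cnt_succ]
  have h : ∀ p : D × D, cnt g (⁅p.1, p.2⁆⁻¹ * w) =
      if ⁅p.1, p.2⁆ = 1 then cnt g w else cnt g (zc * w) := by
    intro p
    rcases comm_mem p with h | h <;> rw [h]
    · simp
    · rw [if_neg (h ▸ zc_ne_one), zc_inv]
  rw [Finset.sum_congr rfl fun p _ => h p, Finset.sum_ite, Finset.sum_const, Finset.sum_const,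
    card40, card24, smul_eq_mul, smul_eq_mul]

lemma cnt_zero_one : cnt 0 1 = 1 := by
  have h : ∀ v : Fin 0 → D × D, P 0 v = 1 := by
    intro v; simp [P]
  rw [cnt, Nat.card_congr (Equiv.subtypeUnivEquiv h), Nat.card_eq_fintype_card]
  simp [Fintype.card_fun]

lemma cnt_zero_zc : cnt 0 zc = 0 := by
  have h : IsEmpty {v : Fin 0 → D × D // P 0 v = zc} := by
    refine ⟨fun v => ?_⟩
    have h := v.2
    simp [P] at h
    exact zc_ne_one h.symm
  rw [cnt]
  exact Nat.card_of_isEmpty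

lemma cnt_formula (g : ℕ) :
    cnt g 1 + cnt g zc = 64 ^ g ∧ cnt g zc + 16 ^ g = cnt g 1 := by
  induction g with
  | zero => simp [cnt_zero_one, cnt_zero_zc]
  | succ g ih =>
    obtain ⟨hA, hB⟩ := ih
    have h1 : cnt (g + 1) 1 = 40 * cnt g 1 + 24 * cnt g zc := by
      rw [cnt_succ', mul_one]
    have h2 : cnt (g + 1) zc = 40 * cnt g zc + 24 * cnt g 1 := by
      rw [cnt_succ', zc_zc]
    constructor
    · rw [h1, h2, pow_succ]
      linarith
    · rw [h1, h2, pow_succ]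
      linarith

lemma two_mul_cnt (g : ℕ) : 2 * cnt g 1 = 64 ^ g + 16 ^ g := by
  obtain ⟨hA, hB⟩ := cnt_formula g
  omega

/-- Homomorphisms out of a one-relator presented group correspond to
functions on the generators killing the relator. -/
def homEquiv {α : Type*} (r : FreeGroup α) {G : Type*} [Group G] :
    (PresentedGroup ({r} : Set (FreeGroup α)) →* G) ≃
      {f : α → G // FreeGroup.lift f r = 1} where
  toFun φ := ⟨fun i => φ (PresentedGroup.of i), by
    have hlift : FreeGroup.lift (fun i => φ (PresentedGroup.of i)) =
        φ.comp (PresentedGroup.mk {r}) := by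
      ext x
      simp [PresentedGroup.of, PresentedGroup.mk]
    rw [hlift, MonoidHom.comp_apply]
    have hone : PresentedGroup.mk ({r} : Set (FreeGroup α)) r = 1 :=
      (QuotientGroup.eq_one_iff r).mpr (Subgroup.subset_normalClosure rfl)
    rw [hone, map_one]⟩
  invFun f := PresentedGroup.toGroup (f := f.1) (by
    rintro s hs
    rw [Set.mem_singleton_iff] at hs
    subst hs
    exact f.2)
  left_inv φ := by
    apply PresentedGroup.ext
    intro x
    rw [PresentedGroup.toGroup.of]
  right_inv f := by
    apply Subtype.ext
    funext i
    exact PresentedGroup.toGroup.of _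

/-- Regrouping a `2g`-tuple into `g` pairs. -/
def pairEquiv (g : ℕ) : (Fin (2 * g) → D) ≃ (Fin g → D × D) where
  toFun f i := (f ⟨2 * i.1, by omega⟩, f ⟨2 * i.1 + 1, by omega⟩)
  invFun v j :=
    if j.1 % 2 = 0 then (v ⟨j.1 / 2, by omega⟩).1 else (v ⟨j.1 / 2, by omega⟩).2
  left_inv f := by
    funext j
    by_cases h : j.1 % 2 = 0
    · dsimp only
      rw [if_pos h]
      have hj : (⟨2 * (j.1 / 2), by omega⟩ : Fin (2 * g)) = j :=
        Fin.ext (show 2 * (j.1 / 2) = j.1 by omega)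
      exact congrArg f hj
    · dsimp only
      rw [if_neg h]
      have hj : (⟨2 * (j.1 / 2) + 1, by omega⟩ : Fin (2 * g)) = j :=
        Fin.ext (show 2 * (j.1 / 2) + 1 = j.1 by omega)
      exact congrArg f hj
  right_inv v := by
    funext i
    have h1 : (2 * i.1) % 2 = 0 := by omega
    have h2 : ¬((2 * i.1 + 1) % 2 = 0) := by omega
    refine Prod.ext ?_ ?_
    · dsimp only
      rw [if_pos h1]
      have hi : (⟨2 * i.1 / 2, by omega⟩ : Fin g) = i :=
        Fin.ext (show 2 * i.1 / 2 = i.1 by omega)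
      exact congrArg (fun j => (v j).1) hi
    · dsimp only
      rw [if_neg h2]
      have hi : (⟨(2 * i.1 + 1) / 2, by omega⟩ : Fin g) = i :=
        Fin.ext (show (2 * i.1 + 1) / 2 = i.1 by omega)
      exact congrArg (fun j => (v j).2) hi

lemma lift_surfaceRelator (g : ℕ) (f : Fin (2 * g) → D) :
    FreeGroup.lift f (surfaceRelator g) = P g (pairEquiv g f) := by
  rw [surfaceRelator, map_list_prod, List.map_ofFn, P]
  have hfn : (⇑(FreeGroup.lift f) ∘ fun i : Fin g =>
      ⁅FreeGroup.of (⟨2 * i.1, by omega⟩ : Fin (2 * g)),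
        FreeGroup.of (⟨2 * i.1 + 1, by omega⟩ : Fin (2 * g))⁆) =
      fun i : Fin g => ⁅(pairEquiv g f i).1, (pairEquiv g f i).2⁆ := by
    funext i
    simp [Function.comp, pairEquiv, commutatorElement_def]
  rw [hfn]

/-- Composition with a `MulEquiv` gives a bijection on hom sets. -/
def compEquiv {A B G : Type*} [Group A] [Group B] [Group G] (e : A ≃* B) :
    (B →* G) ≃ (A →* G) where
  toFun φ := φ.comp e.toMonoidHom
  invFun ψ := ψ.comp e.symm.toMonoidHom
  left_inv φ := by ext b; simp
  right_inv ψ := by ext a; simp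

lemma cardD : Fintype.card D = 8 := by decide

end SurfaceAux

open SurfaceAux in
/-- For every `g ≥ 2` and every `k`, the genus-`g` surface group is not
isomorphic to the free group of rank `k`. -/
theorem surfaceGroup_not_iso_freeGroup (g : ℕ) (hg : 2 ≤ g) (k : ℕ) :
    ¬ Nonempty (SurfaceGroup g ≃* FreeGroup (Fin k)) := by
  rintro ⟨e⟩
  -- counting homomorphisms into `D`, via the presentation
  have hcard1 : Nat.card (SurfaceGroup g →* D) = cnt g 1 := by
    refine Nat.card_congr ((homEquiv (surfaceRelator g)).trans ?_)
    exact Equiv.subtypeEquiv (pairEquiv g) (fun f => by rw [lift_surfaceRelator])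
  -- counting homomorphisms into `D`, via the isomorphism with the free group
  have hcard2 : Nat.card (SurfaceGroup g →* D) = 8 ^ k := by
    have e1 : (SurfaceGroup g →* D) ≃ (FreeGroup (Fin k) →* D) := compEquiv e.symm
    have e2 : (FreeGroup (Fin k) →* D) ≃ (Fin k → D) := FreeGroup.lift.symm
    rw [Nat.card_congr (e1.trans e2), Nat.card_eq_fintype_card, Fintype.card_fun, cardD,
      Fintype.card_fin]
  have hc : cnt g 1 = 8 ^ k := by rw [← hcard1, hcard2]
  have key : 2 * 8 ^ k = 64 ^ g + 16 ^ g := by rw [← hc, two_mul_cnt]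
  -- arithmetic contradiction: `2^(3k+1) = 2^(4g) * (2^(2g) + 1)` is impossible
  have e16 : (16 : ℕ) ^ g = 2 ^ (4 * g) := by
    rw [show (16 : ℕ) = 2 ^ 4 from rfl, ← pow_mul]
  have e4 : (4 : ℕ) ^ g = 2 ^ (2 * g) := by
    rw [show (4 : ℕ) = 2 ^ 2 from rfl, ← pow_mul]
  have e64 : (64 : ℕ) ^ g = 2 ^ (4 * g) * 2 ^ (2 * g) := by
    rw [show (64 : ℕ) = 16 * 4 from rfl, mul_pow, e16, e4]
  have e8 : (8 : ℕ) ^ k = 2 ^ (3 * k) := by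
    rw [show (8 : ℕ) = 2 ^ 3 from rfl, ← pow_mul]
  have key2 : 2 ^ (3 * k + 1) = 2 ^ (4 * g) * (2 ^ (2 * g) + 1) := by
    rw [pow_succ, ← e8, mul_comm (8 ^ k) 2, key, e64, e16]
    ring
  have hle : 4 * g ≤ 3 * k + 1 := by
    have h1 : (2 : ℕ) ^ (4 * g) ≤ 2 ^ (3 * k + 1) := by
      rw [key2]
      exact Nat.le_mul_of_pos_right _ (by positivity)
    exact (Nat.pow_le_pow_iff_right (by norm_num)).mp h1
  obtain ⟨d, hd⟩ : ∃ d, 3 * k + 1 = 4 * g + d := ⟨3 * k + 1 - 4 * g, by omega⟩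
  rw [hd, pow_add] at key2
  have hcancel : 2 ^ d = 2 ^ (2 * g) + 1 :=
    Nat.eq_of_mul_eq_mul_left (by positivity) key2
  have hpos : (0 : ℕ) < 2 ^ (2 * g) := by positivity
  cases d with
  | zero => rw [pow_zero] at hcancel; omega
  | succ e =>
    have hdvd1 : 2 ∣ 2 ^ (e + 1) := dvd_pow_self 2 (Nat.succ_ne_zero e)
    have hdvd2 : 2 ∣ 2 ^ (2 * g) := dvd_pow_self 2 (by omega)
    omega
end
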